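/- Let n ≥ 2, let A be a real n×n singular irreducible M-matrix, and let L_G and U_G be the FSAI factors associated with admissible patterns S_L and S_U. Then every diagonal entry of L_G A U_G is strictly positive. -/

import Mathlib

open Matrix

/-- The spectral radius of a real matrix: the maximum modulus of its complex
eigenvalues (supremum of moduli of elements of the complex spectrum). -/
noncomputable def specRad {n : ℕ} (B : Matrix (Fin n) (Fin n) ℝ) : ℝ :=
  sSup ((fun z : ℂ => ‖z‖) '' spectrum ℂ (B.map Complex.ofReal))

/-- A real square matrix is a Z-matrix if its off-diagonal entries are nonpositive. -/
def IsZMatrix {n : ℕ} (A : Matrix (Fin n) (Fin n) ℝ) : Prop :=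
  ∀ i j, i ≠ j → A i j ≤ 0

/-- A Z-matrix `A` is a nonsingular M-matrix if `A = s • 1 - B` with `B`
entrywise nonnegative and `s > ρ(B)`. -/
def IsNonsingularMMatrix {n : ℕ} (A : Matrix (Fin n) (Fin n) ℝ) : Prop :=
  IsZMatrix A ∧ ∃ (s : ℝ) (B : Matrix (Fin n) (Fin n) ℝ),
    (∀ i j, 0 ≤ B i j) ∧ specRad B < s ∧ A = s • (1 : Matrix (Fin n) (Fin n) ℝ) - B

/-- A Z-matrix `A` is a singular M-matrix if `A = ρ(B) • 1 - B` with `B`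
entrywise nonnegative. -/
def IsSingularMMatrix {n : ℕ} (A : Matrix (Fin n) (Fin n) ℝ) : Prop :=
  IsZMatrix A ∧ ∃ B : Matrix (Fin n) (Fin n) ℝ,
    (∀ i j, 0 ≤ B i j) ∧ A = specRad B • (1 : Matrix (Fin n) (Fin n) ℝ) - B

/-- A matrix is irreducible if its directed graph (edge `i → j` iff `A i j ≠ 0`)
is strongly connected. -/
def IsIrreducibleMatrix {n : ℕ} (A : Matrix (Fin n) (Fin n) ℝ) : Prop :=
  ∀ i j : Fin n, Relation.ReflTransGen (fun a b : Fin n => A a b ≠ 0) i j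

/-- Lower triangular real matrix. -/
def IsLowerTri {n : ℕ} (L : Matrix (Fin n) (Fin n) ℝ) : Prop :=
  ∀ i j : Fin n, i < j → L i j = 0

/-- Upper triangular real matrix. -/
def IsUpperTri {n : ℕ} (U : Matrix (Fin n) (Fin n) ℝ) : Prop :=
  ∀ i j : Fin n, j < i → U i j = 0

/-- `L` is an FSAI lower triangular factor of `A` for the pattern `S`:
`L` is lower triangular, vanishes off the pattern, and `(L * A) i j = δ i j`
on the pattern. -/
def IsFSAILowerFactor {n : ℕ} (A L : Matrix (Fin n) (Fin n) ℝ)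
    (S : Set (Fin n × Fin n)) : Prop :=
  IsLowerTri L ∧ (∀ p : Fin n × Fin n, p ∉ S → L p.1 p.2 = 0) ∧
    ∀ p : Fin n × Fin n, p ∈ S → (L * A) p.1 p.2 = if p.1 = p.2 then 1 else 0

/-- `U` is an FSAI upper triangular factor of `A` for the pattern `S`:
`U` is upper triangular, vanishes off the pattern, and `(A * U) i j = δ i j`
on the pattern. -/
def IsFSAIUpperFactor {n : ℕ} (A U : Matrix (Fin n) (Fin n) ℝ)
    (S : Set (Fin n × Fin n)) : Prop :=
  IsUpperTri U ∧ (∀ p : Fin n × Fin n, p ∉ S → U p.1 p.2 = 0) ∧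
    ∀ p : Fin n × Fin n, p ∈ S → (A * U) p.1 p.2 = if p.1 = p.2 then 1 else 0


open Matrix Polynomial Filter Topology Relation
open scoped ENNReal NNReal

namespace FsaiAux
variable {n : ℕ}

lemma mem_spectrum_iff_det {M : Matrix (Fin n) (Fin n) ℂ} {z : ℂ} :
    z ∈ spectrum ℂ M ↔ (z • (1 : Matrix (Fin n) (Fin n) ℂ) - M).det = 0 := by
  rw [spectrum.mem_iff, Algebra.algebraMap_eq_smul_one,
    Matrix.isUnit_iff_isUnit_det, isUnit_iff_ne_zero, not_not]

lemma eval_charpoly' (M : Matrix (Fin n) (Fin n) ℂ) (z : ℂ) :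
    M.charpoly.eval z = (z • (1 : Matrix (Fin n) (Fin n) ℂ) - M).det := by
  rw [Matrix.charpoly, ← Polynomial.coe_evalRingHom, RingHom.map_det]
  congr 1
  ext i j
  simp [Matrix.charmatrix, Matrix.one_apply, Matrix.smul_apply, Matrix.diagonal_apply]
  split <;> simp

lemma spec_finite (M : Matrix (Fin n) (Fin n) ℂ) [Nonempty (Fin n)] :
    (spectrum ℂ M).Finite := by
  apply Set.Finite.subset (Polynomial.finite_setOf_isRoot (M.charpoly_monic.ne_zero))
  intro z hz
  have : M.charpoly.IsRoot z := by
    rw [Polynomial.IsRoot, eval_charpoly' M z]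
    exact mem_spectrum_iff_det.mp hz
  exact this

lemma spec_nonempty (M : Matrix (Fin n) (Fin n) ℂ) (hn : 0 < n) :
    (spectrum ℂ M).Nonempty := by
  have : Nonempty (Fin n) := ⟨⟨0, hn⟩⟩
  have hdeg : 0 < M.charpoly.degree := by
    rw [Matrix.charpoly_degree_eq_dim]
    exact_mod_cast by simpa using hn
  obtain ⟨z, hz⟩ := Complex.exists_root hdeg
  exact ⟨z, mem_spectrum_iff_det.mpr ((eval_charpoly' M z) ▸ hz)⟩

lemma abs_le_specRad (hn : 0 < n) (B : Matrix (Fin n) (Fin n) ℝ) {z : ℂ}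
    (hz : z ∈ spectrum ℂ (B.map Complex.ofReal)) : ‖z‖ ≤ specRad B := by
  have : Nonempty (Fin n) := ⟨⟨0, hn⟩⟩
  exact le_csSup ((spec_finite _).image _).bddAbove ⟨z, hz, rfl⟩

lemma exists_abs_eq_specRad (hn : 0 < n) (B : Matrix (Fin n) (Fin n) ℝ) :
    ∃ z ∈ spectrum ℂ (B.map Complex.ofReal), ‖z‖ = specRad B := by
  have : Nonempty (Fin n) := ⟨⟨0, hn⟩⟩
  have hfin := (spec_finite (B.map Complex.ofReal)).image (fun z : ℂ => ‖z‖)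
  have hne := (spec_nonempty (B.map Complex.ofReal) hn).image (fun z : ℂ => ‖z‖)
  obtain ⟨z, hz, hz2⟩ := hne.csSup_mem hfin
  exact ⟨z, hz, hz2⟩

lemma specRad_nonneg (hn : 0 < n) (B : Matrix (Fin n) (Fin n) ℝ) : 0 ≤ specRad B := by
  obtain ⟨z, _, hz⟩ := exists_abs_eq_specRad hn B
  rw [← hz]; positivity

lemma det_ne_zero_of_specRad_lt (hn : 0 < n) (B : Matrix (Fin n) (Fin n) ℝ) {t : ℝ}
    (ht : specRad B < t) : (t • (1 : Matrix (Fin n) (Fin n) ℝ) - B).det ≠ 0 := by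
  intro hdet
  have : ((t : ℂ) • (1 : Matrix (Fin n) (Fin n) ℂ) - B.map Complex.ofReal).det = 0 := by
    have h2 := congrArg (Complex.ofRealHom) hdet
    rw [map_zero, RingHom.map_det] at h2
    rw [← h2]
    congr 1
    ext i j
    simp only [RingHom.mapMatrix_apply, Matrix.map_apply, Matrix.sub_apply,
      Matrix.smul_apply, Matrix.one_apply, smul_eq_mul]
    split <;> simp
  have hmem : (t : ℂ) ∈ spectrum ℂ (B.map Complex.ofReal) := mem_spectrum_iff_det.mpr this
  have := abs_le_specRad hn B hmem
  rw [Complex.norm_real, Real.norm_eq_abs] at this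
  have h0 : 0 ≤ specRad B := specRad_nonneg hn B
  nlinarith [le_abs_self t]


section Gelfand
attribute [local instance] Matrix.linftyOpNormedRing Matrix.linftyOpNormedAlgebra

lemma gelfand_lower (hn : 0 < n) (B : Matrix (Fin n) (Fin n) ℝ) (m : ℕ) (hm : 0 < m)
    (θ : ℝ) (hθ : 0 < θ)
    (h : ∀ k : ℕ, ∃ i : Fin n, θ ^ k ≤ ∑ l, (B ^ (m * k)) i l) :
    θ ≤ specRad B ^ m := by
  have hne : Nonempty (Fin n) := ⟨⟨0, hn⟩⟩
  haveI : CompleteSpace (Matrix (Fin n) (Fin n) ℂ) := FiniteDimensional.complete ℂ _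
  set A' : Matrix (Fin n) (Fin n) ℂ := B.map Complex.ofReal with hA'
  have hmap : ∀ k : ℕ, A' ^ k = (B ^ k).map Complex.ofReal := by
    intro k
    have : A' = Complex.ofRealHom.mapMatrix B := rfl
    rw [this, ← map_pow]
    rfl
  have hG := spectrum.pow_nnnorm_pow_one_div_tendsto_nhds_spectralRadius A'
  have hmono : Tendsto (fun j : ℕ => m * j) atTop atTop :=
    Filter.tendsto_atTop_atTop_of_monotone (fun a b hab => Nat.mul_le_mul_left m hab)
      (fun b => ⟨b, Nat.le_mul_of_pos_left b hm⟩)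
  have hGm : Tendsto (fun j : ℕ => ((‖A' ^ (m * j)‖₊ : ℝ≥0∞) ^ (1 / (m * j : ℕ) : ℝ)) ^ m)
      atTop (𝓝 ((spectralRadius ℂ A') ^ m)) :=
    ((ENNReal.continuous_pow m).continuousAt.tendsto.comp (hG.comp hmono))
  have hbound : ∀ᶠ j : ℕ in atTop,
      ENNReal.ofReal θ ≤ ((‖A' ^ (m * j)‖₊ : ℝ≥0∞) ^ (1 / (m * j : ℕ) : ℝ)) ^ m := by
    filter_upwards [eventually_ge_atTop 1] with j hj
    obtain ⟨i, hil⟩ := h j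
    have hnorm : ENNReal.ofReal (θ ^ j) ≤ (‖A' ^ (m * j)‖₊ : ℝ≥0∞) := by
      rw [← ENNReal.ofReal_coe_nnreal, coe_nnnorm]
      apply ENNReal.ofReal_le_ofReal
      calc θ ^ j ≤ ∑ l, (B ^ (m * j)) i l := hil
        _ ≤ ∑ l, ‖(A' ^ (m * j)) i l‖ := by
            apply Finset.sum_le_sum
            intro l _
            rw [hmap, Matrix.map_apply, Complex.norm_real]
            exact le_abs_self _
        _ ≤ ‖A' ^ (m * j)‖ := by
            have h1 : (∑ l, ‖(A' ^ (m * j)) i l‖₊ : ℝ≥0) ≤ ‖A' ^ (m * j)‖₊ := by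
              rw [Matrix.linfty_opNNNorm_def]
              exact Finset.le_sup (f := fun i' => ∑ l', ‖(A' ^ (m * j)) i' l'‖₊)
                (Finset.mem_univ i)
            have h2 : (∑ l, ‖(A' ^ (m * j)) i l‖₊ : ℝ≥0) = (∑ l, ‖(A' ^ (m * j)) i l‖ : ℝ) := by
              push_cast; rfl
            calc (∑ l, ‖(A' ^ (m * j)) i l‖ : ℝ) = (∑ l, ‖(A' ^ (m * j)) i l‖₊ : ℝ≥0) := h2.symm
              _ ≤ (‖A' ^ (m * j)‖₊ : ℝ≥0) := h1
              _ = ‖A' ^ (m * j)‖ := rfl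
    have hmj : (m * j : ℕ) ≠ 0 := by positivity
    have key : ((ENNReal.ofReal (θ ^ j)) ^ (1 / (m * j : ℕ) : ℝ)) ^ m = ENNReal.ofReal θ := by
      have hj' : (j:ℝ) ≠ 0 := by positivity
      have hm' : (m:ℝ) ≠ 0 := by positivity
      rw [ENNReal.ofReal_pow hθ.le, ← ENNReal.rpow_natCast (ENNReal.ofReal θ) j,
        ← ENNReal.rpow_mul, ← ENNReal.rpow_natCast _ m, ← ENNReal.rpow_mul]
      rw [show ((j:ℝ) * (1 / ((m*j:ℕ):ℝ))) * (m:ℝ) = 1 by push_cast; field_simp]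
      exact ENNReal.rpow_one _
    calc ENNReal.ofReal θ
        = ((ENNReal.ofReal (θ ^ j)) ^ (1 / (m * j : ℕ) : ℝ)) ^ m := key.symm
      _ ≤ _ := by
          apply pow_le_pow_left' (ENNReal.rpow_le_rpow hnorm (by positivity))
  have hle : ENNReal.ofReal θ ≤ (spectralRadius ℂ A') ^ m := ge_of_tendsto hGm hbound
  have hsr : spectralRadius ℂ A' ≤ ENNReal.ofReal (specRad B) := by
    rw [spectralRadius]
    apply iSup₂_le
    intro z hz
    rw [← ENNReal.ofReal_coe_nnreal, coe_nnnorm]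
    apply ENNReal.ofReal_le_ofReal
    exact abs_le_specRad hn B hz
  have : ENNReal.ofReal θ ≤ ENNReal.ofReal (specRad B ^ m) := by
    calc ENNReal.ofReal θ ≤ (spectralRadius ℂ A') ^ m := hle
      _ ≤ (ENNReal.ofReal (specRad B)) ^ m := pow_le_pow_left' hsr m
      _ = ENNReal.ofReal (specRad B ^ m) := (ENNReal.ofReal_pow (specRad_nonneg hn B) m).symm
  rwa [ENNReal.ofReal_le_ofReal_iff (pow_nonneg (specRad_nonneg hn B) m)] at this

end Gelfand

/-- The edge relation of a nonnegative matrix. -/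
def rB (B : Matrix (Fin n) (Fin n) ℝ) : Fin n → Fin n → Prop :=
  fun a b => a ≠ b ∧ 0 < B a b

lemma first_step {B : Matrix (Fin n) (Fin n) ℝ} {i j : Fin n}
    (h : ReflTransGen (rB B) i j) (hij : i ≠ j) : ∃ k, i ≠ k ∧ 0 < B i k := by
  rcases h.cases_head with rfl | ⟨c, hc, -⟩
  · exact absurd rfl hij
  · exact ⟨c, hc⟩

lemma pow_entry_nonneg {B : Matrix (Fin n) (Fin n) ℝ} (hB : ∀ i j, 0 ≤ B i j) :
    ∀ (k : ℕ) (i j : Fin n), 0 ≤ (B ^ k) i j := by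
  intro k
  induction k with
  | zero => intro i j; simp [Matrix.one_apply]; split <;> norm_num
  | succ k ih =>
    intro i j
    rw [pow_succ, Matrix.mul_apply]
    exact Finset.sum_nonneg fun l _ => mul_nonneg (ih i l) (hB l j)

lemma pow_entry_prod {B : Matrix (Fin n) (Fin n) ℝ} (hB : ∀ i j, 0 ≤ B i j)
    (p q : ℕ) (i j k : Fin n) : (B ^ p) i j * (B ^ q) j k ≤ (B ^ (p + q)) i k := by
  rw [pow_add, Matrix.mul_apply]
  exact Finset.single_le_sum (f := fun l => (B ^ p) i l * (B ^ q) l k)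
    (fun l _ => mul_nonneg (pow_entry_nonneg hB p i l) (pow_entry_nonneg hB q l k))
    (Finset.mem_univ j)

lemma path_pow {B : Matrix (Fin n) (Fin n) ℝ} (hB : ∀ i j, 0 ≤ B i j) {i j : Fin n}
    (h : ReflTransGen (rB B) i j) : ∃ m : ℕ, 0 < (B ^ m) i j := by
  induction h with
  | refl => exact ⟨0, by simp [Matrix.one_apply]⟩
  | @tail b c hab hbc ih =>
    obtain ⟨m, hm⟩ := ih
    refine ⟨m + 1, lt_of_lt_of_le ?_ (by simpa using pow_entry_prod hB m 1 i b c)⟩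
    exact mul_pos hm hbc.2


lemma specRad_pos (hn : 2 ≤ n) {B : Matrix (Fin n) (Fin n) ℝ} (hB : ∀ i j, 0 ≤ B i j)
    (hirrB : ∀ i j, ReflTransGen (rB B) i j) : 0 < specRad B := by
  have hn0 : 0 < n := by omega
  have hab : (⟨0, by omega⟩ : Fin n) ≠ (⟨1, by omega⟩ : Fin n) := by
    intro h; simpa using congrArg Fin.val h
  obtain ⟨k, hak, hk⟩ := first_step (hirrB _ _) hab
  obtain ⟨m', hm'⟩ := path_pow hB (hirrB k ⟨0, by omega⟩)
  set a : Fin n := ⟨0, by omega⟩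
  set m := 1 + m' with hm
  have hδ : 0 < (B ^ m) a a := by
    have := pow_entry_prod hB 1 m' a k a
    rw [pow_one] at this
    exact lt_of_lt_of_le (mul_pos hk hm') this
  set δ := (B ^ m) a a with hδdef
  have hiter : ∀ k : ℕ, δ ^ k ≤ (B ^ (m * k)) a a := by
    intro k
    induction k with
    | zero => simp [Matrix.one_apply]
    | succ k ih =>
      calc δ ^ (k + 1) = δ ^ k * δ := by ring
        _ ≤ (B ^ (m * k)) a a * (B ^ m) a a := by
            apply mul_le_mul ih (le_refl _) hδ.le (pow_entry_nonneg hB _ _ _)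
        _ ≤ (B ^ (m * k + m)) a a := pow_entry_prod hB _ _ _ _ _
        _ = (B ^ (m * (k + 1))) a a := by ring_nf
  have hge : δ ≤ specRad B ^ m := by
    apply gelfand_lower hn0 B m (by omega) δ hδ
    intro k
    refine ⟨a, le_trans (hiter k) ?_⟩
    exact Finset.single_le_sum (f := fun l => (B ^ (m * k)) a l)
      (fun l _ => pow_entry_nonneg hB _ _ _) (Finset.mem_univ a)
  by_contra hc
  push_neg at hc
  have h0 : specRad B = 0 := le_antisymm hc (specRad_nonneg hn0 B)
  rw [h0] at hge
  simp [hm] at hge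
  nlinarith

lemma specRad_ge_of_subinvariant (hn : 0 < n) {B : Matrix (Fin n) (Fin n) ℝ}
    (hB : ∀ i j, 0 ≤ B i j) {θ : ℝ} (hθ : 0 ≤ θ) {u : Fin n → ℝ}
    (hu : ∀ j, 0 < u j) (h : ∀ j, θ * u j ≤ B.mulVec u j) : θ ≤ specRad B := by
  rcases eq_or_lt_of_le hθ with rfl | hθ'
  · exact specRad_nonneg hn B
  have claim1 : ∀ (k : ℕ) (j : Fin n), θ ^ k * u j ≤ (B ^ k).mulVec u j := by
    intro k
    induction k with
    | zero => intro j; simp [Matrix.one_mulVec]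
    | succ k ih =>
      intro j
      have : (B ^ (k+1)).mulVec u = B.mulVec ((B ^ k).mulVec u) := by
        rw [pow_succ', Matrix.mulVec_mulVec]
      rw [this]
      calc θ ^ (k+1) * u j = θ ^ k * (θ * u j) := by ring
        _ ≤ θ ^ k * B.mulVec u j := by
            apply mul_le_mul_of_nonneg_left (h j) (by positivity)
        _ = ∑ l, B j l * (θ ^ k * u l) := by
            rw [Matrix.mulVec, dotProduct, Finset.mul_sum]; congr 1; ext l; ring
        _ ≤ ∑ l, B j l * ((B ^ k).mulVec u l) := by
            apply Finset.sum_le_sum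
            intro l _
            exact mul_le_mul_of_nonneg_left (ih l) (hB j l)
        _ = B.mulVec ((B ^ k).mulVec u) j := rfl
  obtain ⟨j0, -, hj0⟩ := Finset.exists_max_image Finset.univ u ⟨⟨0, hn⟩, Finset.mem_univ _⟩
  have key : ∀ k : ℕ, θ ^ k ≤ ∑ l, (B ^ k) j0 l := by
    intro k
    have h1 : θ ^ k * u j0 ≤ (∑ l, (B ^ k) j0 l) * u j0 := by
      calc θ ^ k * u j0 ≤ (B ^ k).mulVec u j0 := claim1 k j0
        _ = ∑ l, (B ^ k) j0 l * u l := rfl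
        _ ≤ ∑ l, (B ^ k) j0 l * u j0 := by
            apply Finset.sum_le_sum
            intro l _
            exact mul_le_mul_of_nonneg_left (hj0 l (Finset.mem_univ l)) (pow_entry_nonneg hB _ _ _)
        _ = (∑ l, (B ^ k) j0 l) * u j0 := by rw [Finset.sum_mul]
    exact le_of_mul_le_mul_right h1 (hu j0)
  have := gelfand_lower hn B 1 one_pos θ hθ' (fun k => ⟨j0, by simpa using key k⟩)
  simpa using this

lemma exists_iter_pos (hn : 0 < n) {B : Matrix (Fin n) (Fin n) ℝ} (hB : ∀ i j, 0 ≤ B i j)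
    (hirrB : ∀ i j, ReflTransGen (rB B) i j) {v : Fin n → ℝ}
    (hv : ∀ j, 0 ≤ v j) (hv0 : v ≠ 0) :
    ∃ m : ℕ, ∀ j, 0 < (((1 + B) ^ m).mulVec v) j := by
  classical
  suffices main : ∀ (N : ℕ) (v : Fin n → ℝ), (∀ j, 0 ≤ v j) → v ≠ 0 →
      (Finset.univ.filter fun j => ¬0 < v j).card ≤ N →
      ∃ m, ∀ j, 0 < (((1 + B) ^ m).mulVec v) j by
    exact main n v hv hv0 ((Finset.card_filter_le _ _).trans (by simp))
  intro N
  induction N with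
  | zero =>
    intro v hv hv0 hcard
    refine ⟨0, fun j => ?_⟩
    rw [pow_zero, Matrix.one_mulVec]
    by_contra hj
    have : j ∈ Finset.univ.filter fun j => ¬0 < v j := by
      simp only [Finset.mem_filter]; exact ⟨Finset.mem_univ j, hj⟩
    rw [Finset.card_eq_zero.mp (Nat.le_zero.mp hcard)] at this
    exact absurd this (Finset.notMem_empty j)
  | succ N ih =>
    intro v hv hv0 hcard
    by_cases hempty : (Finset.univ.filter fun j => ¬0 < v j) = ∅
    · refine ⟨0, fun j => ?_⟩
      rw [pow_zero, Matrix.one_mulVec]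
      by_contra hj
      have : j ∈ Finset.univ.filter fun j => ¬0 < v j := by
        simp only [Finset.mem_filter]; exact ⟨Finset.mem_univ j, hj⟩
      rw [hempty] at this
      exact absurd this (Finset.notMem_empty j)
    · obtain ⟨j1, hj1⟩ := Finset.nonempty_iff_ne_empty.mpr hempty
      simp only [Finset.mem_filter] at hj1
      have hj1z : v j1 = 0 := le_antisymm (not_lt.mp hj1.2) (hv j1)
      obtain ⟨j0, hj0⟩ : ∃ j, 0 < v j := by
        by_contra hno
        push_neg at hno
        exact hv0 (funext fun j => le_antisymm (hno j) (hv j))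
      -- find an edge from the zero set into the positive set
      have edge : ∃ a b, v a = 0 ∧ rB B a b ∧ 0 < v b := by
        have find : ∀ {x y : Fin n}, ReflTransGen (rB B) x y → 0 < v y → v x = 0 →
            ∃ a b, v a = 0 ∧ rB B a b ∧ 0 < v b := by
          intro x y hpath
          induction hpath using ReflTransGen.head_induction_on with
          | refl => intro hy hx; rw [hx] at hy; exact absurd hy (lt_irrefl 0)
          | head hstep htail ih2 =>
            rename_i x' w
            intro hy hx
            by_cases hw : 0 < v w
            · exact ⟨x', w, hx, hstep, hw⟩
            · exact ih2 hy (le_antisymm (not_lt.mp hw) (hv w))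
        exact find (hirrB j1 j0) hj0 hj1z
      obtain ⟨a, b, hva, hab, hvb⟩ := edge
      set v' := (1 + B).mulVec v with hv'def
      have hv'formula : ∀ j, v' j = v j + ∑ l, B j l * v l := by
        intro j
        simp [hv'def, Matrix.add_mulVec, Matrix.one_mulVec, Matrix.mulVec, dotProduct]
      have hv'nonneg : ∀ j, 0 ≤ v' j := by
        intro j
        rw [hv'formula]
        exact add_nonneg (hv j) (Finset.sum_nonneg fun l _ => mul_nonneg (hB j l) (hv l))
      have hv'pos : ∀ j, 0 < v j → 0 < v' j := by
        intro j hj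
        rw [hv'formula]
        exact lt_of_lt_of_le hj (le_add_of_nonneg_right
          (Finset.sum_nonneg fun l _ => mul_nonneg (hB j l) (hv l)))
      have hv'a : 0 < v' a := by
        rw [hv'formula, hva, zero_add]
        have : B a b * v b ≤ ∑ l, B a l * v l :=
          Finset.single_le_sum (f := fun l => B a l * v l)
            (fun l _ => mul_nonneg (hB a l) (hv l)) (Finset.mem_univ b)
        exact lt_of_lt_of_le (mul_pos hab.2 hvb) this
      have hsubset : (Finset.univ.filter fun j => ¬0 < v' j) ⊆
          (Finset.univ.filter fun j => ¬0 < v j) := by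
        intro j hj
        simp only [Finset.mem_filter] at *
        exact ⟨Finset.mem_univ j, fun hjv => hj.2 (hv'pos j hjv)⟩
      have hsub : (Finset.univ.filter fun j => ¬0 < v' j) ⊂
          (Finset.univ.filter fun j => ¬0 < v j) := by
        rw [Finset.ssubset_iff_of_subset hsubset]
        refine ⟨a, ?_, ?_⟩
        · simp only [Finset.mem_filter]; exact ⟨Finset.mem_univ a, by rw [hva]; exact lt_irrefl 0⟩
        · simp only [Finset.mem_filter, not_and, not_not]
          intro _; exact hv'a
      have hcard' : (Finset.univ.filter fun j => ¬0 < v' j).card ≤ N := by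
        have := Finset.card_lt_card hsub
        omega
      have hv'ne : v' ≠ 0 := by
        intro hz
        rw [hz] at hv'a
        exact absurd hv'a (lt_irrefl 0)
      obtain ⟨m, hm⟩ := ih v' hv'nonneg hv'ne hcard'
      refine ⟨m + 1, fun j => ?_⟩
      have : ((1 + B) ^ (m + 1)).mulVec v = ((1 + B) ^ m).mulVec v' := by
        rw [hv'def, Matrix.mulVec_mulVec, ← pow_succ]
      rw [this]
      exact hm j

lemma one_add_mulVec_formula (B : Matrix (Fin n) (Fin n) ℝ) (w : Fin n → ℝ) (j : Fin n) :
    ((1 + B).mulVec w) j = w j + ∑ l, B j l * w l := by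
  rw [Matrix.add_mulVec, Matrix.one_mulVec]
  rfl

lemma step_pos_preserve {B : Matrix (Fin n) (Fin n) ℝ} (hB : ∀ i j, 0 ≤ B i j)
    {w : Fin n → ℝ} (hw : ∀ j, 0 < w j) : ∀ j, 0 < ((1 + B).mulVec w) j := by
  intro j
  rw [one_add_mulVec_formula]
  exact lt_of_lt_of_le (hw j) (le_add_of_nonneg_right
    (Finset.sum_nonneg fun l _ => mul_nonneg (hB j l) (hw l).le))

lemma iter_pos_preserve {B : Matrix (Fin n) (Fin n) ℝ} (hB : ∀ i j, 0 ≤ B i j)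
    (k : ℕ) : ∀ {w : Fin n → ℝ}, (∀ j, 0 < w j) →
    ∀ j, 0 < (((1 + B) ^ k).mulVec w) j := by
  induction k with
  | zero => intro w hw j; rw [pow_zero, Matrix.one_mulVec]; exact hw j
  | succ k ih =>
    intro w hw j
    have h2 : ((1 + B) ^ (k + 1)).mulVec w = ((1 + B) ^ k).mulVec ((1 + B).mulVec w) := by
      rw [Matrix.mulVec_mulVec, ← pow_succ]
    rw [h2]
    exact ih (step_pos_preserve hB hw) j

lemma exists_perron (hn : 2 ≤ n) {B : Matrix (Fin n) (Fin n) ℝ} (hB : ∀ i j, 0 ≤ B i j)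
    (hirrB : ∀ i j, ReflTransGen (rB B) i j) :
    ∃ w : Fin n → ℝ, (∀ j, 0 < w j) ∧ B.mulVec w = specRad B • w := by
  classical
  have hn0 : 0 < n := by omega
  set c := specRad B with hc
  obtain ⟨z, hzmem, hzabs⟩ := exists_abs_eq_specRad hn0 B
  have hdet := mem_spectrum_iff_det.mp hzmem
  obtain ⟨v, hv0, hveq⟩ := (Matrix.exists_mulVec_eq_zero_iff).mpr hdet
  have heig : (B.map Complex.ofReal).mulVec v = z • v := by
    have h1 : (z • (1 : Matrix (Fin n) (Fin n) ℂ)).mulVec v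
        - (B.map Complex.ofReal).mulVec v = 0 := by
      rw [← Matrix.sub_mulVec]; exact hveq
    have h2 : (z • (1 : Matrix (Fin n) (Fin n) ℂ)).mulVec v = z • v := by
      rw [Matrix.smul_mulVec, Matrix.one_mulVec]
    rw [h2] at h1
    exact (sub_eq_zero.mp h1).symm
  set u : Fin n → ℝ := fun j => ‖v j‖ with hu
  have hu_nonneg : ∀ j, 0 ≤ u j := fun j => norm_nonneg _
  have hu_ne : u ≠ 0 := by
    intro h0
    apply hv0
    funext j
    have : u j = 0 := congrFun h0 j
    rw [hu] at this
    simpa using this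
  have hsub : ∀ j, c * u j ≤ B.mulVec u j := by
    intro j
    have h1 : c * u j = ‖z * v j‖ := by
      rw [norm_mul, hzabs]
    have h1' : c * u j = ‖(z • v) j‖ := by
      rw [Pi.smul_apply, smul_eq_mul]; exact h1
    rw [h1', ← heig]
    calc ‖(B.map Complex.ofReal).mulVec v j‖
        = ‖∑ l, (B j l : ℂ) * v l‖ := rfl
      _ ≤ ∑ l, ‖(B j l : ℂ) * v l‖ :=
          norm_sum_le _ _
      _ = ∑ l, B j l * u l := by
          apply Finset.sum_congr rfl
          intro l _
          rw [norm_mul, Complex.norm_real, Real.norm_eq_abs, abs_of_nonneg (hB j l)]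
      _ = B.mulVec u j := rfl
  set d : Fin n → ℝ := fun j => B.mulVec u j - c * u j with hd
  have hd_nonneg : ∀ j, 0 ≤ d j := fun j => by simp [hd, hsub j]
  by_cases hdz : d = 0
  · -- exact eigen equation; upgrade to positivity
    have heq : B.mulVec u = c • u := by
      funext j
      have h3 : (B *ᵥ u) j - c * u j = 0 := by
        have := congrFun hdz j
        simpa [hd] using this
      simp only [Pi.smul_apply, smul_eq_mul]
      linarith
    have hprop : ∀ a b : Fin n, ReflTransGen (rB B) a b → u a = 0 → u b = 0 := by
      intro a b hpath
      induction hpath with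
      | refl => exact id
      | @tail x y hax hxy ih =>
        intro ha
        have hx : u x = 0 := ih ha
        have hrow : (B.mulVec u) x = 0 := by
          rw [heq, Pi.smul_apply, smul_eq_mul, hx, mul_zero]
        have hsum : ∑ l, B x l * u l = 0 := hrow
        have hterm : B x y * u y = 0 := by
          have := (Finset.sum_eq_zero_iff_of_nonneg
            (fun l _ => mul_nonneg (hB x l) (hu_nonneg l))).mp hsum y (Finset.mem_univ y)
          exact this
        rcases mul_eq_zero.mp hterm with h | h
        · exact absurd h (ne_of_gt hxy.2)
        · exact h
    have hpos : ∀ j, 0 < u j := by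
      by_contra hcon
      push_neg at hcon
      obtain ⟨k, hk⟩ := hcon
      have hk0 : u k = 0 := le_antisymm hk (hu_nonneg k)
      apply hu_ne
      funext j
      exact hprop k j (hirrB k j) hk0
    exact ⟨u, hpos, heq⟩
  · -- strict inequality somewhere: contradiction with maximality of specRad
    exfalso
    obtain ⟨m₁, hm₁⟩ := exists_iter_pos hn0 hB hirrB hu_nonneg hu_ne
    obtain ⟨m₂, hm₂⟩ := exists_iter_pos hn0 hB hirrB hd_nonneg hdz
    set M := max m₁ m₂ with hM
    set u' := ((1 + B) ^ M).mulVec u with hu'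
    set d' := ((1 + B) ^ M).mulVec d with hd'
    have hu'pos : ∀ j, 0 < u' j := by
      have : ((1 + B) ^ M).mulVec u = ((1 + B) ^ (M - m₁)).mulVec (((1 + B) ^ m₁).mulVec u) := by
        rw [Matrix.mulVec_mulVec, ← pow_add]
        have hle : m₁ ≤ M := by rw [hM]; exact le_max_left m₁ m₂
        congr 2
        rw [Nat.sub_add_cancel hle]
      rw [hu', this]
      exact iter_pos_preserve hB _ hm₁
    have hd'pos : ∀ j, 0 < d' j := by
      have : ((1 + B) ^ M).mulVec d = ((1 + B) ^ (M - m₂)).mulVec (((1 + B) ^ m₂).mulVec d) := by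
        rw [Matrix.mulVec_mulVec, ← pow_add]
        have hle : m₂ ≤ M := by rw [hM]; exact le_max_right m₁ m₂
        congr 2
        rw [Nat.sub_add_cancel hle]
      rw [hd', this]
      exact iter_pos_preserve hB _ hm₂
    have hcomm : B * (1 + B) ^ M = (1 + B) ^ M * B := by
      have : Commute B (1 + B) := (Commute.one_right B).add_right (Commute.refl B)
      exact (this.pow_right M).eq
    have hBu : B.mulVec u = c • u + d := by
      funext j
      simp only [Pi.add_apply, Pi.smul_apply, smul_eq_mul, hd]
      ring
    have hkey : B.mulVec u' = c • u' + d' := by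
      rw [hu', Matrix.mulVec_mulVec, hcomm, ← Matrix.mulVec_mulVec, hBu,
        Matrix.mulVec_add, Matrix.mulVec_smul]
    have hne' : Nonempty (Fin n) := ⟨⟨0, hn0⟩⟩
    set ε := Finset.univ.inf' Finset.univ_nonempty (fun j => d' j / u' j) with hε
    have hεpos : 0 < ε := by
      rw [hε, Finset.lt_inf'_iff]
      intro j _
      exact div_pos (hd'pos j) (hu'pos j)
    have hεle : ∀ j, ε * u' j ≤ d' j := by
      intro j
      have h1 : ε ≤ d' j / u' j := Finset.inf'_le _ (Finset.mem_univ j)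
      rwa [le_div_iff₀ (hu'pos j)] at h1
    have hfinal : ∀ j, (c + ε) * u' j ≤ B.mulVec u' j := by
      intro j
      rw [hkey]
      simp only [Pi.add_apply, Pi.smul_apply, smul_eq_mul]
      have := hεle j
      nlinarith
    have hcnn : 0 ≤ c := specRad_nonneg hn0 B
    have := specRad_ge_of_subinvariant hn0 hB
      (by linarith : (0:ℝ) ≤ c + ε) hu'pos hfinal
    rw [← hc] at this
    linarith


lemma irrB_of_irrA {A B : Matrix (Fin n) (Fin n) ℝ} {c : ℝ}
    (hB : ∀ i j, 0 ≤ B i j)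
    (hAeq : A = c • (1 : Matrix (Fin n) (Fin n) ℝ) - B)
    (hirr : ∀ i j : Fin n, ReflTransGen (fun a b : Fin n => A a b ≠ 0) i j) :
    ∀ i j, ReflTransGen (rB B) i j := by
  intro i j
  have h := hirr i j
  induction h with
  | refl => exact ReflTransGen.refl
  | @tail x y hax hxy ih =>
    by_cases hxy' : x = y
    · rw [← hxy']; exact ih
    · apply ih.tail
      refine ⟨hxy', ?_⟩
      have : A x y = -B x y := by
        rw [hAeq]
        simp [Matrix.sub_apply, Matrix.smul_apply, Matrix.one_apply, hxy']
      rw [this] at hxy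
      rcases lt_or_eq_of_le (hB x y) with h | h
      · exact h
      · exact absurd (by rw [← h]; ring) hxy

lemma e_vecMul (i : Fin n) (M : Matrix (Fin n) (Fin n) ℝ) :
    (Pi.single i (1:ℝ)) ᵥ* M = fun k => M i k := by
  funext k
  simp only [Matrix.vecMul, dotProduct]
  rw [Finset.sum_eq_single i]
  · simp
  · intro b _ hb; simp [Pi.single_apply, hb]
  · intro h; exact absurd (Finset.mem_univ i) h

lemma e_mulVec (i : Fin n) (M : Matrix (Fin n) (Fin n) ℝ) :
    M.mulVec (Pi.single i (1:ℝ)) = fun k => M k i := by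
  funext k
  simp only [Matrix.mulVec, dotProduct]
  rw [Finset.sum_eq_single i]
  · simp
  · intro b _ hb; simp [Pi.single_apply, hb]
  · intro h; exact absurd (Finset.mem_univ i) h


/-- The "padded" matrix `c•1 - B` restricted to `R×R` with `c` on the diagonal outside. -/
def padM (B : Matrix (Fin n) (Fin n) ℝ) (c : ℝ) (R : Finset (Fin n)) :
    Matrix (Fin n) (Fin n) ℝ :=
  Matrix.of fun j k => (if j = k then c else 0) - (if j ∈ R ∧ k ∈ R then B j k else 0)

lemma padM_mulVec (B : Matrix (Fin n) (Fin n) ℝ) (c : ℝ) (R : Finset (Fin n))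
    (v : Fin n → ℝ) (j : Fin n) :
    (padM B c R).mulVec v j = c * v j - ∑ k, (if j ∈ R ∧ k ∈ R then B j k else 0) * v k := by
  simp only [padM, Matrix.mulVec, dotProduct, Matrix.of_apply, sub_mul,
    Finset.sum_sub_distrib]
  congr 1
  simp [ite_mul]

lemma padM_offdiag_nonpos {B : Matrix (Fin n) (Fin n) ℝ} (hB : ∀ i j, 0 ≤ B i j)
    (c : ℝ) (R : Finset (Fin n)) {j k : Fin n} (hjk : j ≠ k) : padM B c R j k ≤ 0 := by
  simp only [padM, Matrix.of_apply, if_neg hjk, zero_sub, neg_nonpos]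
  split
  · exact hB j k
  · exact le_refl 0

lemma key_nonneg (hn : 2 ≤ n) {B : Matrix (Fin n) (Fin n) ℝ} (hB : ∀ i j, 0 ≤ B i j)
    (hirrB : ∀ i j, ReflTransGen (rB B) i j) {c : ℝ} (hc : 0 < c) {w : Fin n → ℝ}
    (hw : ∀ j, 0 < w j) (hPerron : B.mulVec w = c • w)
    {R : Finset (Fin n)} (hR : R ≠ Finset.univ) {v : Fin n → ℝ}
    (hv : ∀ j, 0 ≤ (padM B c R).mulVec v j) : ∀ j, 0 ≤ v j := by
  classical
  by_contra hcon
  push_neg at hcon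
  obtain ⟨j0, hj0⟩ := hcon
  set g := fun j => -v j / w j with hg
  have hne : Nonempty (Fin n) := ⟨j0⟩
  obtain ⟨jm, -, hjm⟩ := Finset.exists_max_image Finset.univ g ⟨j0, Finset.mem_univ _⟩
  set m := g jm with hm
  have hm_pos : 0 < m := lt_of_lt_of_le (div_pos (neg_pos.mpr hj0) (hw j0))
    (hjm j0 (Finset.mem_univ _))
  have hvm : ∀ k, -v k ≤ m * w k := by
    intro k
    have := hjm k (Finset.mem_univ _)
    rw [hg] at this
    calc -v k = (-v k / w k) * w k := (div_mul_cancel₀ _ (ne_of_gt (hw k))).symm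
      _ ≤ m * w k := mul_le_mul_of_nonneg_right this (hw k).le
  set Att := fun j : Fin n => -v j = m * w j with hAttDef
  have hAtt_jm : Att jm := by
    show -v jm = m * w jm
    rw [hm, hg]
    exact (div_mul_cancel₀ _ (ne_of_gt (hw jm))).symm
  have hBw : ∀ j, ∑ k, B j k * w k = c * w j := by
    intro j
    have := congrFun hPerron j
    simpa [Matrix.mulVec, dotProduct] using this
  -- main structural consequence at an attainer
  have main : ∀ j, Att j →
      (∀ k, (if j ∈ R ∧ k ∈ R then B j k else 0) = B j k) ∧
      (∀ k, 0 < B j k → Att k) := by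
    intro j hAttj
    set pB := fun k => (if j ∈ R ∧ k ∈ R then B j k else 0) with hpB
    have hpB_nonneg : ∀ k, 0 ≤ pB k := by
      intro k; rw [hpB]; dsimp; split
      · exact hB j k
      · exact le_refl 0
    have hpB_le : ∀ k, pB k ≤ B j k := by
      intro k; rw [hpB]; dsimp; split
      · exact le_refl _
      · exact hB j k
    set S1 := ∑ k, pB k * (v k + m * w k) with hS1
    set S2 := ∑ k, (B j k - pB k) * w k with hS2
    have hS1_nonneg : 0 ≤ S1 := Finset.sum_nonneg fun k _ =>
      mul_nonneg (hpB_nonneg k) (by have := hvm k; linarith)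
    have hS2_nonneg : 0 ≤ S2 := Finset.sum_nonneg fun k _ =>
      mul_nonneg (by have := hpB_le k; linarith) (hw k).le
    have hsum : (padM B c R).mulVec v j + S1 + m * S2 = 0 := by
      rw [padM_mulVec, hS1, hS2]
      have e1 : ∑ k, pB k * (v k + m * w k) = (∑ k, pB k * v k) + m * ∑ k, pB k * w k := by
        rw [Finset.mul_sum, ← Finset.sum_add_distrib]
        congr 1; ext k; ring
      have e2 : ∑ k, (B j k - pB k) * w k = (∑ k, B j k * w k) - ∑ k, pB k * w k := by
        rw [← Finset.sum_sub_distrib]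
        congr 1; ext k; ring
      rw [e1, e2, hBw j]
      have hAj : -v j = m * w j := hAttj
      have : ∑ k, (if j ∈ R ∧ k ∈ R then B j k else 0) * v k = ∑ k, pB k * v k := by
        apply Finset.sum_congr rfl; intro k _; rw [hpB]
      rw [this]
      nlinarith [hAj]
    have hMv := hv j
    have hS1_zero : S1 = 0 := by nlinarith
    have hS2_zero : S2 = 0 := by nlinarith
    constructor
    · intro k
      have := (Finset.sum_eq_zero_iff_of_nonneg (fun k _ =>
        mul_nonneg (by have := hpB_le k; linarith : (0:ℝ) ≤ B j k - pB k) (hw k).le)).mp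
        hS2_zero k (Finset.mem_univ k)
      have h2 : B j k - pB k = 0 := by
        rcases mul_eq_zero.mp this with h | h
        · exact h
        · exact absurd h (ne_of_gt (hw k))
      rw [hpB] at h2
      dsimp at h2
      linarith
    · intro k hBjk
      have hterm := (Finset.sum_eq_zero_iff_of_nonneg (fun k _ =>
        mul_nonneg (hpB_nonneg k) (by have := hvm k; linarith : (0:ℝ) ≤ v k + m * w k))).mp
        hS1_zero k (Finset.mem_univ k)
      have hpBk : pB k = B j k := by
        have := (Finset.sum_eq_zero_iff_of_nonneg (fun k _ =>
          mul_nonneg (by have := hpB_le k; linarith : (0:ℝ) ≤ B j k - pB k) (hw k).le)).mp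
          hS2_zero k (Finset.mem_univ k)
        rcases mul_eq_zero.mp this with h | h
        · linarith
        · exact absurd h (ne_of_gt (hw k))
      rw [hpBk] at hterm
      rcases mul_eq_zero.mp hterm with h | h
      · exact absurd h (ne_of_gt hBjk)
      · rw [hAttDef]; linarith
  -- propagation along paths
  have hprop : ∀ a b : Fin n, ReflTransGen (rB B) a b → Att a → Att b := by
    intro a b hpath
    induction hpath with
    | refl => exact id
    | @tail x y hax hxy ih =>
      intro ha
      exact (main x (ih ha)).2 y hxy.2
  -- pick a vertex outside R
  obtain ⟨t, ht⟩ : ∃ t, t ∉ R := by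
    by_contra hall
    push_neg at hall
    exact hR (Finset.eq_univ_iff_forall.mpr hall)
  have hAtt_t : Att t := hprop jm t (hirrB jm t) hAtt_jm
  have hrow := (main t hAtt_t).1
  -- t has an outgoing edge
  obtain ⟨s, hts, hBts⟩ : ∃ s, t ≠ s ∧ 0 < B t s := by
    have h2 : ∃ s : Fin n, t ≠ s := by
      by_cases h0 : t = ⟨0, by omega⟩
      · exact ⟨⟨1, by omega⟩, by rw [h0]; intro h; simpa using congrArg Fin.val h⟩
      · exact ⟨⟨0, by omega⟩, h0⟩
    obtain ⟨s, hs⟩ := h2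
    exact first_step (hirrB t s) hs
  have := hrow s
  rw [if_neg (fun hmem => ht hmem.1)] at this
  exact absurd this.symm (ne_of_gt hBts)


section KeyInv
variable (hn : 2 ≤ n) {B : Matrix (Fin n) (Fin n) ℝ} (hB : ∀ i j, 0 ≤ B i j)
  (hirrB : ∀ i j, ReflTransGen (rB B) i j) {c : ℝ} (hc : 0 < c) {w : Fin n → ℝ}
  (hw : ∀ j, 0 < w j) (hPerron : B.mulVec w = c • w)
  {R : Finset (Fin n)} (hR : R ≠ Finset.univ)

include hn hB hirrB hc hw hPerron hR

lemma key_isUnit : IsUnit (padM B c R).det := by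
  rw [isUnit_iff_ne_zero]
  intro hdet
  obtain ⟨v, hv0, hveq⟩ := (Matrix.exists_mulVec_eq_zero_iff).mpr hdet
  have h1 : ∀ j, 0 ≤ v j := by
    apply key_nonneg hn hB hirrB hc hw hPerron hR
    intro j
    rw [hveq]
    exact le_refl 0
  have h2 : ∀ j, 0 ≤ (-v) j := by
    apply key_nonneg hn hB hirrB hc hw hPerron hR
    intro j
    rw [Matrix.mulVec_neg, hveq]
    simp
  apply hv0
  funext j
  have := h2 j
  simp only [Pi.neg_apply] at this
  have := h1 j
  simp only [Pi.zero_apply]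
  linarith [h2 j]

lemma key_mul_inv : padM B c R * (padM B c R)⁻¹ = 1 :=
  Matrix.mul_nonsing_inv _ (key_isUnit hn hB hirrB hc hw hPerron hR)

lemma key_inv_mul : (padM B c R)⁻¹ * padM B c R = 1 :=
  Matrix.nonsing_inv_mul _ (key_isUnit hn hB hirrB hc hw hPerron hR)

lemma key_inv_nonneg : ∀ j k, 0 ≤ (padM B c R)⁻¹ j k := by
  intro j k
  have hcol : ∀ l, 0 ≤ (fun i => (padM B c R)⁻¹ i k) l := by
    apply key_nonneg hn hB hirrB hc hw hPerron hR
    intro l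
    have : (padM B c R).mulVec (fun i => (padM B c R)⁻¹ i k) l
        = (padM B c R * (padM B c R)⁻¹) l k := by
      simp [Matrix.mulVec, Matrix.mul_apply, dotProduct]
    rw [this, key_mul_inv hn hB hirrB hc hw hPerron hR]
    by_cases hlk : l = k <;> simp [Matrix.one_apply, hlk]
  exact hcol j

lemma key_inv_diag_pos : ∀ j, 0 < (padM B c R)⁻¹ j j := by
  intro j
  have h1 : (1 : Matrix (Fin n) (Fin n) ℝ) j j = 1 := by simp
  have h2 : ∑ k, padM B c R j k * (padM B c R)⁻¹ k j = 1 := by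
    rw [← Matrix.mul_apply, key_mul_inv hn hB hirrB hc hw hPerron hR, h1]
  have h3 : ∀ k, k ≠ j → padM B c R j k * (padM B c R)⁻¹ k j ≤ 0 := by
    intro k hkj
    exact mul_nonpos_of_nonpos_of_nonneg
      (padM_offdiag_nonpos hB c R (fun h => hkj h.symm))
      (key_inv_nonneg hn hB hirrB hc hw hPerron hR k j)
  have h4 : padM B c R j j * (padM B c R)⁻¹ j j ≥ 1 := by
    have := Finset.sum_eq_sum_sdiff_singleton_add (Finset.mem_univ j)
      (fun k => padM B c R j k * (padM B c R)⁻¹ k j)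
    rw [this] at h2
    have h5 : ∑ k ∈ Finset.univ \ {j}, padM B c R j k * (padM B c R)⁻¹ k j ≤ 0 := by
      apply Finset.sum_nonpos
      intro k hk
      simp only [Finset.mem_sdiff, Finset.mem_singleton] at hk
      exact h3 k hk.2
    linarith
  by_contra hcon
  push_neg at hcon
  have h6 : (padM B c R)⁻¹ j j = 0 :=
    le_antisymm hcon (key_inv_nonneg hn hB hirrB hc hw hPerron hR j j)
  rw [h6, mul_zero] at h4
  linarith

end KeyInv

end FsaiAux

open FsaiAux in
theorem fsai_LAU_pos_diagonal (n : ℕ) (hn : 2 ≤ n)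
    (A : Matrix (Fin n) (Fin n) ℝ)
    (hA : IsSingularMMatrix A) (hirr : IsIrreducibleMatrix A)
    (SL SU : Set (Fin n × Fin n))
    (hSL1 : SL ⊆ {p : Fin n × Fin n | p.2 ≤ p.1})
    (hSL2 : ∀ i : Fin n, (i, i) ∈ SL)
    (hSL3 : ((⟨n - 1, by omega⟩ : Fin n), (⟨n - 2, by omega⟩ : Fin n)) ∉ SL)
    (hSU1 : SU ⊆ {p : Fin n × Fin n | p.1 ≤ p.2})
    (hSU2 : ∀ i : Fin n, (i, i) ∈ SU)
    (hSU3 : ((⟨n - 2, by omega⟩ : Fin n), (⟨n - 1, by omega⟩ : Fin n)) ∉ SU)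
    (L U : Matrix (Fin n) (Fin n) ℝ)
    (hL : IsFSAILowerFactor A L SL) (hU : IsFSAIUpperFactor A U SU) :
    ∀ i, 0 < (L * A * U) i i := by
  classical
  obtain ⟨hZ, B, hB, hAeq⟩ := hA
  set c := specRad B with hcdef
  have hirrB : ∀ i j, ReflTransGen (rB B) i j := irrB_of_irrA hB hAeq hirr
  have hc : 0 < c := specRad_pos hn hB hirrB
  obtain ⟨w, hw, hPerron⟩ := exists_perron hn hB hirrB
  have hAval : ∀ j k, A j k = (if j = k then c else 0) - B j k := by
    intro j k
    rw [hAeq]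
    simp [Matrix.sub_apply, Matrix.smul_apply, Matrix.one_apply]
  intro i
  -- patterns as finsets
  set P : Finset (Fin n) := Finset.univ.filter (fun k => (i, k) ∈ SL) with hPdef
  set Q : Finset (Fin n) := Finset.univ.filter (fun k => (k, i) ∈ SU) with hQdef
  set R : Finset (Fin n) := P ∪ Q with hRdef
  have hiP : i ∈ P := by rw [hPdef]; simp [hSL2 i]
  have hiQ : i ∈ Q := by rw [hQdef]; simp [hSU2 i]
  have hiR : i ∈ R := by rw [hRdef]; exact Finset.mem_union_left _ hiP
  have hmemP : ∀ k, k ∈ P ↔ (i, k) ∈ SL := by intro k; rw [hPdef]; simp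
  have hmemQ : ∀ k, k ∈ Q ↔ (k, i) ∈ SU := by intro k; rw [hQdef]; simp
  -- a vertex outside P and Q
  obtain ⟨t, htP, htQ⟩ : ∃ t, t ∉ P ∧ t ∉ Q := by
    by_cases hi : (i : ℕ) = n - 1
    · refine ⟨⟨n - 2, by omega⟩, ?_, ?_⟩
      · rw [hmemP]
        intro hmem
        apply hSL3
        have : i = (⟨n - 1, by omega⟩ : Fin n) := Fin.ext hi
        rwa [this] at hmem
      · rw [hmemQ]
        intro hmem
        apply hSU3
        have : i = (⟨n - 1, by omega⟩ : Fin n) := Fin.ext hi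
        rwa [this] at hmem
    · have hilt : (i : ℕ) < n - 1 := by have := i.isLt; omega
      refine ⟨⟨n - 1, by omega⟩, ?_, ?_⟩
      · rw [hmemP]
        intro hmem
        have := hSL1 hmem
        simp only [Set.mem_setOf_eq] at this
        have : (n - 1 : ℕ) ≤ (i : ℕ) := this
        omega
      · rw [hmemQ]
        intro hmem
        have := hSU1 hmem
        simp only [Set.mem_setOf_eq] at this
        have : (n - 1 : ℕ) ≤ (i : ℕ) := this
        omega
  have htR : t ∉ R := by
    rw [hRdef]
    simp only [Finset.mem_union]
    rintro (h | h)
    · exact htP h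
    · exact htQ h
  have hPne : P ≠ Finset.univ := fun h => htP (h ▸ Finset.mem_univ t)
  have hQne : Q ≠ Finset.univ := fun h => htQ (h ▸ Finset.mem_univ t)
  have hRne : R ≠ Finset.univ := fun h => htR (h ▸ Finset.mem_univ t)
  have hR'ne : R.erase i ≠ Finset.univ :=
    fun h => (Finset.notMem_erase i R) (h ▸ Finset.mem_univ i)
  -- the four padded matrices and their inverses
  set MP := padM B c P with hMP
  set MQ := padM B c Q with hMQ
  set M := padM B c R with hM
  set M' := padM B c (R.erase i) with hM'
  set K := M⁻¹ with hK
  have hMval : ∀ j k, j ∈ R → k ∈ R → M j k = A j k := by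
    intro j k hj hk
    rw [hM, hAval]
    simp [padM, hj, hk]
  have hMPval : ∀ j k, j ∈ P → k ∈ P → MP j k = A j k := by
    intro j k hj hk
    rw [hMP, hAval]
    simp [padM, hj, hk]
  have hMQval : ∀ j k, j ∈ Q → k ∈ Q → MQ j k = A j k := by
    intro j k hj hk
    rw [hMQ, hAval]
    simp [padM, hj, hk]
  have hMout : ∀ j k, ¬(j ∈ R ∧ k ∈ R) → M j k = if j = k then c else 0 := by
    intro j k hjk
    rw [hM]
    simp only [padM, Matrix.of_apply, if_neg hjk, sub_zero]
  -- FSAI vectors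
  set x : Fin n → ℝ := fun k => L i k with hx
  set y : Fin n → ℝ := fun k => U k i with hy
  have hx_supp : ∀ k, k ∉ P → x k = 0 := by
    intro k hk
    exact hL.2.1 (i, k) (fun hmem => hk ((hmemP k).mpr hmem))
  have hy_supp : ∀ k, k ∉ Q → y k = 0 := by
    intro k hk
    exact hU.2.1 (k, i) (fun hmem => hk ((hmemQ k).mpr hmem))
  have hLA : ∀ k, k ∈ P → ∑ j, x j * A j k = if i = k then 1 else 0 := by
    intro k hk
    have := hL.2.2 (i, k) ((hmemP k).mp hk)
    rw [← this, Matrix.mul_apply]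
  have hAU : ∀ j, j ∈ Q → ∑ k, A j k * y k = if j = i then 1 else 0 := by
    intro j hj
    have := hU.2.2 (j, i) ((hmemQ j).mp hj)
    rw [← this, Matrix.mul_apply]
  -- x solves the P-system
  have hxMP : x ᵥ* MP = Pi.single i 1 := by
    funext k
    rw [Matrix.vecMul, dotProduct]
    by_cases hk : k ∈ P
    · have : ∑ j, x j * MP j k = ∑ j, x j * A j k := by
        apply Finset.sum_congr rfl
        intro j _
        by_cases hj : j ∈ P
        · rw [hMPval j k hj hk]
        · rw [hx_supp j hj]; ring
      rw [this, hLA k hk, Pi.single_apply]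
      by_cases h : i = k
      · rw [if_pos h, if_pos h.symm]
      · rw [if_neg h, if_neg (fun hh : k = i => h hh.symm)]
    · have : ∑ j, x j * MP j k = 0 := by
        apply Finset.sum_eq_zero
        intro j _
        by_cases hj : j ∈ P
        · have hjk : j ≠ k := fun h => hk (h ▸ hj)
          have : MP j k = if j = k then c else 0 := by
            rw [hMP]
            simp only [padM, Matrix.of_apply, if_neg (fun h : j ∈ P ∧ k ∈ P => hk h.2), sub_zero]
          rw [this, if_neg hjk]; ring
        · rw [hx_supp j hj]; ring
      rw [this, Pi.single_apply, if_neg (fun h : k = i => hk (h ▸ hiP))]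
  -- y solves the Q-system
  have hyMQ : MQ.mulVec y = Pi.single i 1 := by
    funext j
    rw [Matrix.mulVec, dotProduct]
    by_cases hj : j ∈ Q
    · have : ∑ k, MQ j k * y k = ∑ k, A j k * y k := by
        apply Finset.sum_congr rfl
        intro k _
        by_cases hk : k ∈ Q
        · rw [hMQval j k hj hk]
        · rw [hy_supp k hk]; ring
      rw [this, hAU j hj, Pi.single_apply]
    · have : ∑ k, MQ j k * y k = 0 := by
        apply Finset.sum_eq_zero
        intro k _
        by_cases hk : k ∈ Q
        · have hjk : j ≠ k := fun h => hj (h ▸ hk)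
          have : MQ j k = if j = k then c else 0 := by
            rw [hMQ]
            simp only [padM, Matrix.of_apply, if_neg (fun h : j ∈ Q ∧ k ∈ Q => hj h.1), sub_zero]
          rw [this, if_neg hjk]; ring
        · rw [hy_supp k hk]; ring
      rw [this, Pi.single_apply, if_neg (fun h : j = i => hj (h ▸ hiQ))]
  -- recover x and y from inverses
  have hxeq : x = fun k => MP⁻¹ i k := by
    have h1 : (x ᵥ* MP) ᵥ* MP⁻¹ = x := by
      rw [Matrix.vecMul_vecMul, key_mul_inv hn hB hirrB hc hw hPerron hPne, Matrix.vecMul_one]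
    rw [hxMP] at h1
    rw [← h1, e_vecMul]
  have hyeq : y = fun k => MQ⁻¹ k i := by
    have h1 : MQ⁻¹.mulVec (MQ.mulVec y) = y := by
      rw [Matrix.mulVec_mulVec, key_inv_mul hn hB hirrB hc hw hPerron hQne, Matrix.one_mulVec]
    rw [hyMQ] at h1
    rw [← h1, e_mulVec]
  have hx_nonneg : ∀ k, 0 ≤ x k := by
    intro k
    rw [hxeq]
    exact key_inv_nonneg hn hB hirrB hc hw hPerron hPne i k
  have hy_nonneg : ∀ k, 0 ≤ y k := by
    intro k
    rw [hyeq]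
    exact key_inv_nonneg hn hB hirrB hc hw hPerron hQne k i
  have hxi_pos : 0 < x i := by
    rw [hxeq]
    exact key_inv_diag_pos hn hB hirrB hc hw hPerron hPne i
  have hyi_pos : 0 < y i := by
    rw [hyeq]
    exact key_inv_diag_pos hn hB hirrB hc hw hPerron hQne i
  -- facts about K = M⁻¹
  have hKnn : ∀ j k, 0 ≤ K j k := key_inv_nonneg hn hB hirrB hc hw hPerron hRne
  have hKii : 0 < K i i := key_inv_diag_pos hn hB hirrB hc hw hPerron hRne i
  have hKM : K * M = 1 := key_inv_mul hn hB hirrB hc hw hPerron hRne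
  have hMK : M * K = 1 := key_mul_inv hn hB hirrB hc hw hPerron hRne
  have hPR : P ⊆ R := by rw [hRdef]; exact Finset.subset_union_left
  have hQR : Q ⊆ R := by rw [hRdef]; exact Finset.subset_union_right
  -- the vectors a = x M and b = M y
  set a : Fin n → ℝ := x ᵥ* M with ha
  set b : Fin n → ℝ := M.mulVec y with hb
  have haR : ∀ k, k ∈ R → a k = ∑ j, x j * A j k := by
    intro k hk
    rw [ha, Matrix.vecMul, dotProduct]
    apply Finset.sum_congr rfl
    intro j _
    by_cases hj : j ∈ P
    · rw [hMval j k (hPR hj) hk]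
    · rw [hx_supp j hj]; ring
  have hbR : ∀ j, j ∈ R → b j = ∑ k, A j k * y k := by
    intro j hj
    rw [hb, Matrix.mulVec, dotProduct]
    apply Finset.sum_congr rfl
    intro k _
    by_cases hk : k ∈ Q
    · rw [hMval j k hj (hQR hk)]
    · rw [hy_supp k hk]; ring
  have hai : a i = 1 := by
    rw [haR i hiR, hLA i hiP, if_pos rfl]
  have hbi : b i = 1 := by
    rw [hbR i hiR, hAU i hiQ, if_pos rfl]
  have ha_np : ∀ k, k ≠ i → a k ≤ 0 := by
    intro k hki
    by_cases hkR : k ∈ R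
    · rw [haR k hkR]
      by_cases hkP : k ∈ P
      · rw [hLA k hkP, if_neg (fun h : i = k => hki h.symm)]
      · apply Finset.sum_nonpos
        intro j _
        by_cases hj : j ∈ P
        · have hjk : j ≠ k := fun h => hkP (h ▸ hj)
          exact mul_nonpos_of_nonneg_of_nonpos (hx_nonneg j) (hZ j k hjk)
        · rw [hx_supp j hj]; simp
    · have : a k = 0 := by
        rw [ha, Matrix.vecMul, dotProduct]
        apply Finset.sum_eq_zero
        intro j _
        by_cases hj : j ∈ P
        · have hjk : j ≠ k := fun h => hkR (h ▸ (hPR hj))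
          rw [hMout j k (fun h => hkR h.2), if_neg hjk]; ring
        · rw [hx_supp j hj]; ring
      rw [this]
  have hb_np : ∀ j, j ≠ i → b j ≤ 0 := by
    intro j hji
    by_cases hjR : j ∈ R
    · rw [hbR j hjR]
      by_cases hjQ : j ∈ Q
      · rw [hAU j hjQ, if_neg hji]
      · apply Finset.sum_nonpos
        intro k _
        by_cases hk : k ∈ Q
        · have hjk : j ≠ k := fun h => hjQ (h ▸ hk)
          exact mul_nonpos_of_nonpos_of_nonneg (hZ j k hjk) (hy_nonneg k)
        · rw [hy_supp k hk]; simp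
    · have : b j = 0 := by
        rw [hb, Matrix.mulVec, dotProduct]
        apply Finset.sum_eq_zero
        intro k _
        by_cases hk : k ∈ Q
        · have hjk : j ≠ k := fun h => hjR (h ▸ (hQR hk))
          rw [hMout j k (fun h => hjR h.1), if_neg hjk]; ring
        · rw [hy_supp k hk]; ring
      rw [this]
  -- recover x from a, y from b
  have hxa : x = a ᵥ* K := by
    rw [ha, Matrix.vecMul_vecMul, hMK, Matrix.vecMul_one]
  have hyb : y = K.mulVec b := by
    rw [hb, Matrix.mulVec_mulVec, hKM, Matrix.one_mulVec]
  -- value as a double sum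
  have hval : (L * A * U) i i = ∑ j, x j * b j := by
    have h1 : (L * A * U) i i = ∑ k, (∑ j, x j * A j k) * y k := by
      rw [Matrix.mul_apply]
      apply Finset.sum_congr rfl
      intro k _
      rw [Matrix.mul_apply]
    have h2 : ∀ k, (∑ j, x j * A j k) * y k = ∑ j, x j * A j k * y k := by
      intro k; rw [Finset.sum_mul]
    have h3 : ∀ j k, x j * A j k * y k = x j * M j k * y k := by
      intro j k
      by_cases hj : j ∈ P
      · by_cases hk : k ∈ Q
        · rw [hMval j k (hPR hj) (hQR hk)]
        · rw [hy_supp k hk]; ring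
      · rw [hx_supp j hj]; ring
    calc (L * A * U) i i = ∑ k, ∑ j, x j * A j k * y k := by
          rw [h1]; exact Finset.sum_congr rfl fun k _ => h2 k
      _ = ∑ k, ∑ j, x j * M j k * y k := by
          exact Finset.sum_congr rfl fun k _ => Finset.sum_congr rfl fun j _ => h3 j k
      _ = ∑ j, ∑ k, x j * M j k * y k := Finset.sum_comm
      _ = ∑ j, x j * b j := by
          apply Finset.sum_congr rfl
          intro j _
          rw [hb, Matrix.mulVec, dotProduct, Finset.mul_sum]
          apply Finset.sum_congr rfl
          intro k _
          ring
  -- the path-product inequality for K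
  have hD : ∀ l k, 0 ≤ K i i * K l k - K l i * K i k := by
    intro l k
    by_cases hli : l = i
    · rw [hli]
      exact le_of_eq (by ring)
    · set K' := M'⁻¹ with hK'
      have hK'nn : ∀ j k, 0 ≤ K' j k := key_inv_nonneg hn hB hirrB hc hw hPerron hR'ne
      have hM'K' : M' * K' = 1 := key_mul_inv hn hB hirrB hc hw hPerron hR'ne
      have hrowKM : ∀ l' k' : Fin n, ∑ s, K l' s * M s k' = if l' = k' then 1 else 0 := by
        intro l' k'
        rw [← Matrix.mul_apply, hKM, Matrix.one_apply]
      set wr : Fin n → ℝ := fun s => K i i * K l s - K l i * K i s with hwr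
      have hwri : wr i = 0 := by rw [hwr]; ring
      have hM'M : ∀ s k', s ≠ i → k' ≠ i → M' s k' = M s k' := by
        intro s k' hs hk'
        rw [hM', hM]
        simp only [padM, Matrix.of_apply]
        congr 1
        by_cases hmem : s ∈ R ∧ k' ∈ R
        · rw [if_pos hmem, if_pos ⟨Finset.mem_erase.mpr ⟨hs, hmem.1⟩,
            Finset.mem_erase.mpr ⟨hk', hmem.2⟩⟩]
        · rw [if_neg hmem, if_neg (fun h => hmem ⟨(Finset.mem_erase.mp h.1).2,
            (Finset.mem_erase.mp h.2).2⟩)]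
      have hwrM' : wr ᵥ* M' = fun k' => K i i * (if l = k' then 1 else 0) := by
        funext k'
        rw [Matrix.vecMul, dotProduct]
        by_cases hk'i : k' = i
        · have hcol : ∀ s, M' s k' = if s = k' then c else 0 := by
            intro s
            rw [hM']
            simp only [padM, Matrix.of_apply]
            have hz : (if s ∈ R.erase i ∧ k' ∈ R.erase i then B s k' else 0) = 0 :=
              if_neg (fun h => by
                have h2 := h.2
                rw [hk'i] at h2
                exact (Finset.notMem_erase i R) h2)
            rw [hz, sub_zero]
          have : ∑ s, wr s * M' s k' = wr k' * c := by
            rw [Finset.sum_eq_single k']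
            · rw [hcol k', if_pos rfl]
            · intro s _ hs
              rw [hcol s, if_neg hs, mul_zero]
            · intro h; exact absurd (Finset.mem_univ k') h
          rw [this, hk'i, hwri, zero_mul, if_neg hli, mul_zero]
        · have h1 : ∑ s, wr s * M' s k' = ∑ s, wr s * M s k' := by
            apply Finset.sum_congr rfl
            intro s _
            by_cases hsi : s = i
            · rw [hsi, hwri]; ring
            · rw [hM'M s k' hsi hk'i]
          have h2 : ∑ s, wr s * M s k'
              = K i i * (∑ s, K l s * M s k') - K l i * (∑ s, K i s * M s k') := by
            rw [Finset.mul_sum, Finset.mul_sum, ← Finset.sum_sub_distrib]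
            apply Finset.sum_congr rfl
            intro s _
            rw [hwr]
            ring
          rw [h1, h2, hrowKM, hrowKM, if_neg (fun h : i = k' => hk'i h.symm), mul_zero, sub_zero]
      have hwr_eq : ∀ s, wr s = K i i * K' l s := by
        have h1 : (wr ᵥ* M') ᵥ* K' = wr := by
          rw [Matrix.vecMul_vecMul, hM'K', Matrix.vecMul_one]
        rw [hwrM'] at h1
        intro s
        rw [← congrFun h1 s]
        rw [Matrix.vecMul, dotProduct]
        rw [Finset.sum_eq_single l]
        · rw [if_pos rfl, mul_one]
        · intro s' _ hs'
          rw [if_neg (fun h => hs' h.symm), mul_zero, zero_mul]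
        · intro h; exact absurd (Finset.mem_univ l) h
      have := mul_nonneg hKii.le (hK'nn l k)
      rw [← hwr_eq k] at this
      exact this
  -- final computation
  have hxi_sum : x i = ∑ l, a l * K l i := by
    rw [hxa, Matrix.vecMul, dotProduct]
  have hyi_sum : y i = ∑ j, K i j * b j := by
    rw [hyb, Matrix.mulVec, dotProduct]
  have hval2 : (L * A * U) i i = ∑ j, ∑ l, a l * K l j * b j := by
    rw [hval]
    apply Finset.sum_congr rfl
    intro j _
    rw [hxa, Matrix.vecMul, dotProduct, Finset.sum_mul]
  have hkey : x i * y i ≤ K i i * (L * A * U) i i := by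
    have hexp : K i i * (L * A * U) i i - x i * y i
        = ∑ j, ∑ l, a l * b j * (K i i * K l j - K l i * K i j) := by
      have e1 : K i i * (L * A * U) i i = ∑ j, ∑ l, a l * K l j * b j * K i i := by
        rw [hval2, Finset.mul_sum]
        apply Finset.sum_congr rfl
        intro j _
        rw [Finset.mul_sum]
        apply Finset.sum_congr rfl
        intro l _
        ring
      have e2 : x i * y i = ∑ j, ∑ l, a l * K l i * K i j * b j := by
        rw [hxi_sum, hyi_sum, Finset.sum_mul_sum]
        rw [Finset.sum_comm]
        apply Finset.sum_congr rfl
        intro j _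
        apply Finset.sum_congr rfl
        intro l _
        ring
      rw [e1, e2, ← Finset.sum_sub_distrib]
      apply Finset.sum_congr rfl
      intro j _
      rw [← Finset.sum_sub_distrib]
      apply Finset.sum_congr rfl
      intro l _
      ring
    have hterm : ∀ j l, 0 ≤ a l * b j * (K i i * K l j - K l i * K i j) := by
      intro j l
      by_cases hlj : l = i
      · rw [hlj]
        have : K i i * K i j - K i i * K i j = 0 := by ring
        rw [this, mul_zero]
      · by_cases hji : j = i
        · rw [hji]
          have : K i i * K l i - K l i * K i i = 0 := by ring
          rw [this, mul_zero]
        · have h1 := ha_np l hlj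
          have h2 := hb_np j hji
          have h3 := hD l j
          have h4 : 0 ≤ a l * b j := by nlinarith
          exact mul_nonneg h4 h3
    have : 0 ≤ K i i * (L * A * U) i i - x i * y i := by
      rw [hexp]
      exact Finset.sum_nonneg fun j _ => Finset.sum_nonneg fun l _ => hterm j l
    linarith
  have hpos : 0 < K i i * (L * A * U) i i :=
    lt_of_lt_of_le (mul_pos hxi_pos hyi_pos) hkey
  nlinarith [hKii, hpos]
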